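/- Let I, K be ideals on a set S with the property AP(I,K): for every sequence (A_n)_{n∈ℕ} of sets in I there is A ∈ I with A_n ∖ A ∈ K for all n. Let P be a PM space and suppose the strong neighborhood filter at p has a countable base. If f : S → P is strong-I-convergent to p, then f is strong-I^K-convergent to p. -/
import Mathlib


open Set
open scoped Classical

/-- A probabilistic metric space, encoded via the family of distance
distribution functions `F a b : ℝ → ℝ`, with the axioms needed for the
strong topology: `F a a = ε₀`, separation of distinct points, symmetry,
and the consequence of continuity of the triangle function `τ`. -/
structure PMSpace (P : Type*) where
  F : P → P → ℝ → ℝ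
  self_one : ∀ a : P, ∀ t : ℝ, 0 < t → F a a t = 1
  ne_sep : ∀ a b : P, a ≠ b → ∃ t : ℝ, 0 < t ∧ F a b t ≤ 1 - t
  symm : ∀ a b : P, ∀ t : ℝ, F a b t = F b a t
  triangle : ∀ t : ℝ, 0 < t → ∃ η : ℝ, 0 < η ∧
    ∀ a b c : P, 1 - η < F a b η → 1 - η < F b c η → 1 - t < F a c t

/-- The strong `t`-neighborhood `N_p(t) = {q : F_{pq}(t) > 1 - t}`. -/
def PMSpace.Nbhd {P : Type*} (M : PMSpace P) (p : P) (t : ℝ) : Set P :=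
  {q | 1 - t < M.F p q t}

/-- An ideal of subsets of `S`. -/
def IsIdeal {S : Type*} (I : Set (Set S)) : Prop :=
  ∅ ∈ I ∧ (∀ A ∈ I, ∀ B, B ⊆ A → B ∈ I) ∧ (∀ A ∈ I, ∀ B ∈ I, A ∪ B ∈ I)

/-- An admissible ideal: contains all singletons and is nontrivial. -/
def IsAdmissibleIdeal {S : Type*} (I : Set (Set S)) : Prop :=
  IsIdeal I ∧ (∀ s : S, {s} ∈ I) ∧ Set.univ ∉ I

/-- The ideal `I ∨ K = {A ∪ B : A ∈ I, B ∈ K}`. -/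
def IdealJoin {S : Type*} (I K : Set (Set S)) : Set (Set S) :=
  {C | ∃ A ∈ I, ∃ B ∈ K, C = A ∪ B}

/-- The trace ideal `K|_A = {C ∩ A : C ∈ K}`. -/
def TraceIdeal {S : Type*} (K : Set (Set S)) (A : Set S) : Set (Set S) :=
  {B | ∃ C ∈ K, B = C ∩ A}

/-- `f` is strong-`K`-convergent to `p`. -/
def StrongConv {S P : Type*} (M : PMSpace P) (K : Set (Set S)) (f : S → P) (p : P) : Prop :=
  ∀ t : ℝ, 0 < t → {s | f s ∉ M.Nbhd p t} ∈ K

/-- `f` is strong-`I^K`-convergent to `p`: there is `A` with `Aᶜ ∈ I`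
(i.e. `A ∈ F(I)`) such that the modification of `f`, equal to `p` off `A`,
is strong-`K`-convergent to `p`. -/
def StrongIKConv {S P : Type*} (M : PMSpace P) (I K : Set (Set S)) (f : S → P) (p : P) : Prop :=
  ∃ A : Set S, Aᶜ ∈ I ∧ StrongConv M K (fun s => if s ∈ A then f s else p) p

/-- `f` is strong-`I`-Cauchy. -/
def StrongCauchy {S P : Type*} (M : PMSpace P) (I : Set (Set S)) (f : S → P) : Prop :=
  ∀ t : ℝ, 0 < t → ∃ m : S, {s | f s ∉ M.Nbhd (f m) t} ∈ I

/-- `f` is strong-`I^K`-Cauchy: there is `A ∈ F(I)` such that `f|_A` is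
strong-`K|_A`-Cauchy. -/
def StrongIKCauchy {S P : Type*} (M : PMSpace P) (I K : Set (Set S)) (f : S → P) : Prop :=
  ∃ A : Set S, Aᶜ ∈ I ∧ ∀ t : ℝ, 0 < t → ∃ m ∈ A,
    {s ∈ A | f s ∉ M.Nbhd (f m) t} ∈ TraceIdeal K A

/-- The strong topology on a PM space, generated by strong neighborhoods. -/
def strongTopology {P : Type*} (M : PMSpace P) : TopologicalSpace P :=
  TopologicalSpace.generateFrom {U | ∃ p : P, ∃ t : ℝ, 0 < t ∧ U = M.Nbhd p t}

theorem stmt11 {S P : Type*} (M : PMSpace P) (I K : Set (Set S))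
    (hI : IsIdeal I) (hK : IsIdeal K)
    (hAP : ∀ A : ℕ → Set S, (∀ n, A n ∈ I) → ∃ B ∈ I, ∀ n, A n \ B ∈ K)
    (f : S → P) (p : P)
    (hbase : ∃ ts : ℕ → ℝ, (∀ n, 0 < ts n) ∧
      ∀ t : ℝ, 0 < t → ∃ n, M.Nbhd p (ts n) ⊆ M.Nbhd p t)
    (h : StrongConv M I f p) : StrongIKConv M I K f p := by
  obtain ⟨ts, hts, hbase⟩ := hbase
  obtain ⟨B, hB, hBK⟩ := hAP (fun n => {s | f s ∉ M.Nbhd p (ts n)}) (fun n => h _ (hts n))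
  refine ⟨Bᶜ, by simpa using hB, ?_⟩
  intro t ht
  obtain ⟨n, hn⟩ := hbase t ht
  refine hK.2.1 _ (hBK n) _ ?_
  intro s hs
  simp only [Set.mem_setOf_eq] at hs
  by_cases hsB : s ∈ Bᶜ
  · simp only [hsB, if_true] at hs
    exact ⟨fun h' => hs (hn h'), hsB⟩
  · simp only [hsB, if_false] at hs
    exact absurd (by simp [PMSpace.Nbhd, M.self_one p t ht, ht] : p ∈ M.Nbhd p t) hs
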